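/- Conversely, if (Z̄, ν) satisfies the Bernstein–Markov inequality for homogeneous polynomials, then (E, w, μ) satisfies the weighted Bernstein–Markov inequality: for every ε > 0 there is C > 0 such that for every integer d ≥ 0 and every polynomial p of degree ≤ d, ‖w^d p‖_E ≤ C(1+ε)^d ‖w^d p‖_{L²(μ)}. -/

import Mathlib

open MeasureTheory

/-- The measure `ν = dm_λ ⊗ dμ` on `ℂ^{N+1}`. -/
noncomputable def nuMeasure {N : ℕ} (μ : Measure (Fin N → ℂ)) (w : (Fin N → ℂ) → ℝ) :
    Measure (ℂ × (Fin N → ℂ)) :=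
  μ.bind (fun l => Measure.map
    (fun θ : ℝ => ((w l * Complex.exp (θ * Complex.I),
        fun i => l i * (w l * Complex.exp (θ * Complex.I))) : ℂ × (Fin N → ℂ)))
    ((ENNReal.ofReal (2 * Real.pi))⁻¹ • (volume.restrict (Set.Ioc 0 (2 * Real.pi)))))

open Finsupp in
noncomputable def homogAux {N : ℕ} (d : ℕ) (p : MvPolynomial (Fin N) ℂ) :
    MvPolynomial (Option (Fin N)) ℂ :=
  ∑ m ∈ p.support, MvPolynomial.monomial
    (Finsupp.mapDomain some m + Finsupp.single none (d - m.degree)) (p.coeff m)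

lemma degree_emb {N : ℕ} (d : ℕ) (m : Fin N →₀ ℕ) (h : m.degree ≤ d) :
    (Finsupp.mapDomain some m + Finsupp.single (none : Option (Fin N)) (d - m.degree)).degree
      = d := by
  classical
  have h1 : (Finsupp.mapDomain (some : Fin N → Option (Fin N)) m).degree = m.degree := by
    exact Finsupp.degree_mapDomain some m
  have h2 : ∀ u v : Option (Fin N) →₀ ℕ, (u + v).degree = u.degree + v.degree := by
    intro u v
    exact map_add _ u v
  rw [h2, h1]
  have h3 : (Finsupp.single (none : Option (Fin N)) (d - m.degree)).degree = d - m.degree := by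
    show (Finsupp.single (none : Option (Fin N)) (d - m.degree)).sum (fun _ e => e) = _
    exact Finsupp.sum_single_index rfl
  rw [h3]
  omega

lemma homogAux_isHomogeneous {N : ℕ} (d : ℕ) (p : MvPolynomial (Fin N) ℂ)
    (h : p.totalDegree ≤ d) : (homogAux d p).IsHomogeneous d := by
  apply MvPolynomial.IsHomogeneous.sum
  intro m hm
  exact MvPolynomial.isHomogeneous_monomial _
    (degree_emb d m (le_trans (MvPolynomial.le_totalDegree hm) h))

lemma eval_homogAux {N : ℕ} (d : ℕ) (p : MvPolynomial (Fin N) ℂ) (h : p.totalDegree ≤ d)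
    (t : ℂ) (l : Fin N → ℂ) :
    MvPolynomial.eval (fun i => Option.elim i t (fun j => l j * t)) (homogAux d p)
      = t ^ d * MvPolynomial.eval l p := by
  classical
  set g : Option (Fin N) → ℂ := fun i => Option.elim i t (fun j => l j * t) with hg
  rw [homogAux, map_sum, MvPolynomial.eval_eq, Finset.mul_sum]
  apply Finset.sum_congr rfl
  intro m hm
  have hmd : m.degree ≤ d := le_trans (MvPolynomial.le_totalDegree hm) h
  rw [MvPolynomial.eval_monomial]
  rw [Finsupp.prod_add_index' (fun i => pow_zero (g i)) (fun i e1 e2 => pow_add (g i) e1 e2)]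
  rw [Finsupp.prod_mapDomain_index (fun b => pow_zero (g b)) (fun b e1 e2 => pow_add (g b) e1 e2)]
  rw [Finsupp.prod_single_index (h := fun i e => g i ^ e) (pow_zero (g none))]
  have hgn : g none = t := rfl
  have hsome : (m.prod fun j e => g (some j) ^ e)
      = (m.prod fun j e => l j ^ e) * t ^ m.degree := by
    rw [Finsupp.prod, Finsupp.prod]
    rw [show (m.degree) = ∑ i ∈ m.support, m i from rfl, ← Finset.prod_pow_eq_pow_sum,
      ← Finset.prod_mul_distrib]
    apply Finset.prod_congr rfl
    intro j _
    show (l j * t) ^ m j = _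
    rw [mul_pow]
  rw [hgn, hsome]
  have : t ^ m.degree * t ^ (d - m.degree) = t ^ d := by
    rw [← pow_add]; congr 1; omega
  have hprod : (m.prod fun j e => l j ^ e) = ∏ i ∈ m.support, l i ^ m i := rfl
  rw [hprod] at *
  rw [mul_assoc, this]
  ring

lemma usc_bddAbove {N : ℕ} (E : Set (Fin N → ℂ)) (hE : IsCompact E)
    (w : (Fin N → ℂ) → ℝ) (h : UpperSemicontinuousOn w E) :
    ∃ M : ℝ, 0 ≤ M ∧ ∀ l ∈ E, w l ≤ M := by
  classical
  have hU : ∀ x ∈ E, {y | y ∈ E → w y < w x + 1} ∈ nhds x := by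
    intro x hx
    have h1 := h x hx (w x + 1) (lt_add_one _)
    rw [eventually_nhdsWithin_iff] at h1
    exact h1
  obtain ⟨t, _, ht⟩ := hE.elim_nhds_subcover _ hU
  refine ⟨∑ x ∈ t, (|w x| + 1), Finset.sum_nonneg (fun x _ => by positivity), ?_⟩
  intro l hl
  have := ht hl
  simp only [Set.mem_iUnion] at this
  obtain ⟨x, hxt, hx⟩ := this
  have h2 : w l < w x + 1 := hx hl
  have h3 : w x + 1 ≤ |w x| + 1 := by
    have := le_abs_self (w x); linarith
  have h4 : |w x| + 1 ≤ ∑ y ∈ t, (|w y| + 1) :=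
    Finset.single_le_sum (f := fun y => |w y| + 1) (fun y _ => by positivity) hxt
  linarith

lemma Z_bounded {N : ℕ} (E : Set (Fin N → ℂ)) (hE : IsCompact E)
    (w : (Fin N → ℂ) → ℝ) (hw_usc : UpperSemicontinuousOn w E) (hw0 : ∀ l ∈ E, 0 ≤ w l)
    (Z : Set (ℂ × (Fin N → ℂ)))
    (hZ : Z = {p | ∃ l ∈ E, ∃ t : ℂ, p = (t, fun i => l i * t) ∧ ‖t‖ = w l}) :
    Bornology.IsBounded Z := by
  obtain ⟨M, hM0, hM⟩ := usc_bddAbove E hE w hw_usc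
  obtain ⟨R, hR⟩ := hE.isBounded.exists_norm_le
  have hR0 : (0:ℝ) ≤ max R 0 := le_max_right _ _
  rw [isBounded_iff_forall_norm_le]
  refine ⟨max M (max R 0 * M), ?_⟩
  rintro z hz
  rw [hZ] at hz
  obtain ⟨l, hl, t, rfl, habs⟩ := hz
  have hwl : w l ≤ M := hM l hl
  have htn : ‖t‖ ≤ M := by
    rw [habs]; exact hwl
  have hbn : ‖fun i => l i * t‖ ≤ max R 0 * M := by
    rw [pi_norm_le_iff_of_nonneg (by positivity)]
    intro i
    calc ‖l i * t‖ = ‖l i‖ * ‖t‖ := norm_mul _ _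
      _ ≤ max R 0 * M := by
          apply mul_le_mul _ htn (norm_nonneg _) hR0
          exact le_trans (norm_le_pi_norm l i) (le_trans (hR l hl) (le_max_left _ _))
  calc ‖((t, fun i => l i * t) : ℂ × (Fin N → ℂ))‖ = max ‖t‖ ‖fun i => l i * t‖ := rfl
    _ ≤ max M (max R 0 * M) := max_le_max htn hbn

lemma elim_cont {N : ℕ} (P : MvPolynomial (Option (Fin N)) ℂ) :
    Continuous fun x : ℂ × (Fin N → ℂ) =>
      ‖(MvPolynomial.eval (fun i => Option.elim i x.1 x.2) P)‖ := by
  apply continuous_norm.comp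
  apply (MvPolynomial.continuous_eval (p := P)).comp
  apply continuous_pi
  intro i
  cases i with
  | none => exact continuous_fst
  | some j => exact (continuous_apply j).comp continuous_snd

lemma nu_integral {N : ℕ} (μ : Measure (Fin N → ℂ)) [IsFiniteMeasure μ]
    (w : (Fin N → ℂ) → ℝ) (hwm : Measurable w) (d : ℕ) (p : MvPolynomial (Fin N) ℂ)
    (hpd : p.totalDegree ≤ d) :
    ∫ x : ℂ × (Fin N → ℂ),
        ‖(MvPolynomial.eval (fun i => Option.elim i x.1 x.2) (homogAux d p))‖ ^ 2
        ∂(nuMeasure μ w)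
    = ∫ l, (w l ^ d * ‖(MvPolynomial.eval l p)‖) ^ 2 ∂μ := by
  classical
  set m₀ : Measure ℝ :=
    (ENNReal.ofReal (2 * Real.pi))⁻¹ • (volume.restrict (Set.Ioc 0 (2 * Real.pi))) with hm₀
  set φ : (Fin N → ℂ) → ℝ → ℂ × (Fin N → ℂ) := fun l θ =>
    ((w l * Complex.exp (θ * Complex.I), fun i => l i * (w l * Complex.exp (θ * Complex.I)))) with hφ
  set F : ℂ × (Fin N → ℂ) → ℝ := fun x =>
    ‖(MvPolynomial.eval (fun i => Option.elim i x.1 x.2) (homogAux d p))‖ ^ 2 with hF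
  set G : (Fin N → ℂ) → ℝ := fun l => (w l ^ d * ‖(MvPolynomial.eval l p)‖) ^ 2 with hG
  have hFc : Continuous F := (elim_cont (homogAux d p)).pow 2
  have hGm : Measurable G := by
    apply Measurable.pow_const
    exact (hwm.pow_const d).mul
      (continuous_norm.comp (MvPolynomial.continuous_eval (p := p))).measurable
  have hφl : ∀ l, Continuous (φ l) := by
    intro l
    apply Continuous.prodMk
    · exact continuous_const.mul (Complex.continuous_exp.comp
        (Complex.continuous_ofReal.mul continuous_const))
    · exact continuous_pi fun i => continuous_const.mul (continuous_const.mul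
        (Complex.continuous_exp.comp (Complex.continuous_ofReal.mul continuous_const)))
  have hΦ : Measurable fun q : (Fin N → ℂ) × ℝ => φ q.1 q.2 := by
    have ht : Measurable fun q : (Fin N → ℂ) × ℝ =>
        ((w q.1 : ℂ) * Complex.exp (q.2 * Complex.I)) := by
      apply Measurable.mul
      · exact Complex.measurable_ofReal.comp (hwm.comp measurable_fst)
      · exact Complex.continuous_exp.measurable.comp
          ((Complex.measurable_ofReal.comp measurable_snd).mul_const Complex.I)
    exact Measurable.prodMk ht (measurable_pi_lambda _ fun i =>
      (((measurable_pi_apply i).comp measurable_fst).mul ht))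
  have hκ : Measurable fun l => Measure.map (φ l) m₀ := by
    apply Measure.measurable_of_measurable_coe
    intro s hs
    have heq : ∀ l, (Measure.map (φ l) m₀) s = m₀ (Prod.mk l ⁻¹' ((fun q :
        (Fin N → ℂ) × ℝ => φ q.1 q.2) ⁻¹' s)) := by
      intro l
      rw [Measure.map_apply (hφl l).measurable hs]
      rfl
    simp_rw [heq]
    exact measurable_measure_prodMk_left (hΦ hs)
  have hFm : Measurable fun x => ENNReal.ofReal (F x) := hFc.measurable.ennreal_ofReal
  have hm₀univ : m₀ Set.univ = 1 := by
    rw [hm₀]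
    rw [Measure.smul_apply, Measure.restrict_apply MeasurableSet.univ, Set.univ_inter,
      Real.volume_Ioc, sub_zero, smul_eq_mul]
    exact ENNReal.inv_mul_cancel (by
        simp only [ne_eq, ENNReal.ofReal_eq_zero, not_le]
        positivity) ENNReal.ofReal_ne_top
  have hFφ : ∀ l θ, F (φ l θ) = G l := by
    intro l θ
    rw [hF]
    show ‖(MvPolynomial.eval (fun i => Option.elim i
      ((w l : ℂ) * Complex.exp (θ * Complex.I))
      (fun j => l j * ((w l : ℂ) * Complex.exp (θ * Complex.I)))) (homogAux d p))‖ ^ 2 = G l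
    rw [eval_homogAux d p hpd]
    rw [norm_mul, norm_pow, norm_mul, Complex.norm_real, Real.norm_eq_abs, Complex.norm_exp_ofReal_mul_I, mul_one]
    rw [hG]
    have habs2 : (|w l| ^ d) ^ 2 = (w l ^ d) ^ 2 := by
      rw [← pow_mul, ← pow_mul, mul_comm d 2, pow_mul, pow_mul, sq_abs]
    simp only [mul_pow]
    rw [habs2]
  have h3 : ∫⁻ x, ENNReal.ofReal (F x) ∂(nuMeasure μ w) = ∫⁻ l, ENNReal.ofReal (G l) ∂μ := by
    rw [nuMeasure, Measure.lintegral_bind hκ.aemeasurable hFm.aemeasurable]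
    apply lintegral_congr
    intro l
    rw [lintegral_map hFm (hφl l).measurable]
    have : ∀ θ : ℝ, ENNReal.ofReal (F (φ l θ)) = ENNReal.ofReal (G l) := fun θ => by
      rw [hFφ l θ]
    simp_rw [this]
    rw [lintegral_const, hm₀univ, mul_one]
  rw [integral_eq_lintegral_of_nonneg_ae (Filter.Eventually.of_forall fun x => by positivity)
      hFc.aestronglyMeasurable,
    integral_eq_lintegral_of_nonneg_ae (Filter.Eventually.of_forall fun l => by positivity)
      hGm.aestronglyMeasurable, h3]

/-- Conversely: if `(Z̄, ν)` satisfies the Bernstein–Markov inequality for homogeneous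
polynomials, then `(E, w, μ)` satisfies the weighted Bernstein–Markov inequality. -/
theorem BM_implies_weighted_BM {N : ℕ} (E : Set (Fin N → ℂ)) (hE : IsCompact E)
    (w : (Fin N → ℂ) → ℝ) (hw_usc : UpperSemicontinuousOn w E)
    (hwm : Measurable w) (hw0 : ∀ l ∈ E, 0 ≤ w l)
    (μ : Measure (Fin N → ℂ)) [IsFiniteMeasure μ] (hμE : μ Eᶜ = 0)
    (Z : Set (ℂ × (Fin N → ℂ)))
    (hZ : Z = {p | ∃ l ∈ E, ∃ t : ℂ,
      p = (t, fun i => l i * t) ∧ ‖t‖ = w l})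
    (hBM : ∀ ε > (0:ℝ), ∃ C > (0:ℝ), ∀ d : ℕ,
      ∀ P : MvPolynomial (Option (Fin N)) ℂ, P.IsHomogeneous d →
      sSup ((fun x : ℂ × (Fin N → ℂ) =>
          ‖(MvPolynomial.eval (fun i => Option.elim i x.1 x.2) P)‖) '' closure Z)
        ≤ C * (1 + ε) ^ d *
          Real.sqrt (∫ x : ℂ × (Fin N → ℂ),
            ‖(MvPolynomial.eval (fun i => Option.elim i x.1 x.2) P)‖ ^ 2
            ∂(nuMeasure μ w))) :
    ∀ ε > (0:ℝ), ∃ C > (0:ℝ), ∀ d : ℕ, ∀ p : MvPolynomial (Fin N) ℂ,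
      p.totalDegree ≤ d →
      sSup ((fun l => w l ^ d * ‖(MvPolynomial.eval l p)‖) '' E)
        ≤ C * (1 + ε) ^ d *
          Real.sqrt (∫ l, (w l ^ d * ‖(MvPolynomial.eval l p)‖) ^ 2 ∂μ) := by
  intro ε hε
  obtain ⟨C, hC, hBMC⟩ := hBM ε hε
  refine ⟨C, hC, ?_⟩
  intro d p hpd
  by_cases hEne : E.Nonempty
  · have key := hBMC d (homogAux d p) (homogAux_isHomogeneous d p hpd)
    rw [nu_integral μ w hwm d p hpd] at key
    refine le_trans ?_ key
    apply csSup_le_csSup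
    · have hZb := Z_bounded E hE w hw_usc hw0 Z hZ
      have hK : IsCompact (closure Z) :=
        Metric.isCompact_of_isClosed_isBounded isClosed_closure hZb.closure
      exact (hK.image (elim_cont (homogAux d p))).bddAbove
    · exact hEne.image _
    · rintro a ⟨l, hl, rfl⟩
      refine ⟨((w l : ℂ), fun i => l i * (w l : ℂ)), subset_closure ?_, ?_⟩
      · rw [hZ]
        exact ⟨l, hl, (w l : ℂ), rfl,
          by rw [Complex.norm_real, Real.norm_eq_abs, abs_of_nonneg (hw0 l hl)]⟩
      · show ‖(MvPolynomial.eval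
            (fun i => Option.elim i ((w l : ℂ)) (fun j => l j * (w l : ℂ))) (homogAux d p))‖ = _
        rw [eval_homogAux d p hpd, norm_mul, norm_pow, Complex.norm_real, Real.norm_eq_abs,
          abs_of_nonneg (hw0 l hl)]
  · rw [Set.not_nonempty_iff_eq_empty] at hEne
    rw [hEne, Set.image_empty, Real.sSup_empty]
    positivity
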